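/- Let (X,‖·‖,τ) be a sequentially complete Saks space, υ a Hausdorff locally convex topology on X generated by a norming directed system Γ_υ of continuous seminorms, and (A,D(A)) a Γ_υ-dissipative linear operator on X. Then λ−A is surjective for some λ>0 if and only if λ−A is surjective for all λ>0; in this case (0,∞) ⊆ ρ(A), i.e. for every λ>0 the inverse (λ−A)^{-1} exists on all of X and is norm-continuous. -/

import Mathlib

open Filter Topology Set

namespace LumerPhillips

variable {X : Type*}

section Defs

variable [NormedAddCommGroup X] [NormedSpace ℝ X]

/-- A directed set of seminorms. -/
def DirectedSeminorms (Γ : Set (Seminorm ℝ X)) : Prop :=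
  ∀ p ∈ Γ, ∀ q ∈ Γ, ∃ r ∈ Γ, p ≤ r ∧ q ≤ r

/-- `Γ` is a system of `t`-continuous seminorms generating the topology `t`, i.e. `t` is
the locally convex topology induced by the seminorms in `Γ`. -/
def GeneratesTop (Γ : Set (Seminorm ℝ X)) (t : TopologicalSpace X) : Prop :=
  (∀ p ∈ Γ, @Continuous X ℝ t _ p) ∧
    t = ⨅ p : Γ,
      (p : Seminorm ℝ X).toSeminormedAddCommGroup.toUniformSpace.toTopologicalSpace

/-- `Γ` is norming: the norm is the pointwise supremum of the seminorms in `Γ`. -/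
def NormingSeminorms (Γ : Set (Seminorm ℝ X)) : Prop :=
  ∀ x : X, ‖x‖ = ⨆ p : Γ, (p : Seminorm ℝ X) x

/-- `(X,‖·‖,τ)` is a Saks space witnessed by the norming directed system `Γ` of τ-continuous
seminorms generating `τ`; `τ` is a Hausdorff locally convex topology coarser than the norm
topology. -/
def IsSaksSystem (τ : TopologicalSpace X) (Γ : Set (Seminorm ℝ X)) : Prop :=
  @T2Space X τ ∧ @LocallyConvexSpace ℝ X _ _ _ _ τ ∧
    (inferInstance : TopologicalSpace X) ≤ τ ∧
    DirectedSeminorms Γ ∧ GeneratesTop Γ τ ∧ NormingSeminorms Γ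

/-- `t` is a linear (vector space) topology on `X`. -/
def IsLinearTop (t : TopologicalSpace X) : Prop :=
  @IsTopologicalAddGroup X t _ ∧ @ContinuousSMul ℝ X _ _ t

/-- The topologies `t` and `s` agree (as subspace topologies) on every norm-bounded set. -/
def AgreeOnBoundedSets (t s : TopologicalSpace X) : Prop :=
  ∀ S : Set X, Bornology.IsBounded S →
    TopologicalSpace.induced ((↑) : S → X) t = TopologicalSpace.induced ((↑) : S → X) s

/-- `γ` is the mixed topology `γ(‖·‖,τ)`: the finest linear topology that agrees with `τ` on
norm-bounded sets and lies between `τ` and the norm topology. (Recall that in Mathlib's order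
on topologies, `t ≤ s` means `t` is finer than `s`.) -/
def IsMixedTopology (τ γ : TopologicalSpace X) : Prop :=
  (IsLinearTop γ ∧ γ ≤ τ ∧ (inferInstance : TopologicalSpace X) ≤ γ ∧ AgreeOnBoundedSets γ τ) ∧
    ∀ t : TopologicalSpace X, IsLinearTop t → t ≤ τ →
      (inferInstance : TopologicalSpace X) ≤ t → AgreeOnBoundedSets t τ → γ ≤ t

/-- `u` is a Cauchy sequence for the (group) topology `t`. -/
def CauchySeqTop (t : TopologicalSpace X) (u : ℕ → X) : Prop :=
  ∀ V ∈ @nhds X t 0, ∃ N : ℕ, ∀ m ≥ N, ∀ n ≥ N, u m - u n ∈ V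

/-- `(X,t)` is sequentially complete. -/
def SeqCompleteTop (t : TopologicalSpace X) : Prop :=
  ∀ u : ℕ → X, CauchySeqTop t u → ∃ x : X, Filter.Tendsto u atTop (@nhds X t x)

/-- `(X,t)` is complete (every Cauchy filter for the group uniformity of `t` converges). -/
def CompleteTop (t : TopologicalSpace X) : Prop :=
  ∀ F : Filter X, F.NeBot →
    (∀ V ∈ @nhds X t 0, ∃ S ∈ F, ∀ x ∈ S, ∀ y ∈ S, x - y ∈ V) →
    ∃ x : X, F ≤ @nhds X t x

/-- The map `λ - A` on the domain `D` of the linear operator `A`. -/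
def lmap (D : Submodule ℝ X) (A : D →ₗ[ℝ] X) (l : ℝ) : D → X :=
  fun x => l • (x : X) - A x

/-- The operator `(A, D)` is `Γ`-dissipative: `p((λ - A)x) ≥ λ p(x)` for all `λ > 0`,
`x ∈ D` and `p ∈ Γ`. -/
def GammaDissipative (Γ : Set (Seminorm ℝ X)) (D : Submodule ℝ X) (A : D →ₗ[ℝ] X) : Prop :=
  ∀ l : ℝ, 0 < l → ∀ x : D, ∀ p ∈ Γ, l * p (x : X) ≤ p (lmap D A l x)

/-- The range of `λ - A`. -/
def opRange (D : Submodule ℝ X) (A : D →ₗ[ℝ] X) (l : ℝ) : Set X :=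
  Set.range (lmap D A l)

/-- The graph of the operator `(A, D)`. -/
def graphSet (D : Submodule ℝ X) (A : D →ₗ[ℝ] X) : Set (X × X) :=
  {p : X × X | ∃ x : D, p = ((x : X), A x)}

/-- The operator `(A, D)` is `t`-closed (equivalently: its graph is closed for the product
topology, which is the net formulation of closedness). -/
def ClosedOp (t : TopologicalSpace X) (D : Submodule ℝ X) (A : D →ₗ[ℝ] X) : Prop :=
  @IsClosed (X × X) (@instTopologicalSpaceProd X X t t) (graphSet D A)

/-- The operator `(A, D)` is sequentially `t`-closed. -/
def SeqClosedOp (t : TopologicalSpace X) (D : Submodule ℝ X) (A : D →ₗ[ℝ] X) : Prop :=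
  ∀ (u : ℕ → D) (x y : X),
    Filter.Tendsto (fun n => (u n : X)) atTop (@nhds X t x) →
    Filter.Tendsto (fun n => A (u n)) atTop (@nhds X t y) →
    ∃ hx : x ∈ D, A ⟨x, hx⟩ = y

/-- `(A', D')` is an extension of `(A, D)`. -/
def ExtensionOp (D : Submodule ℝ X) (A : D →ₗ[ℝ] X)
    (D' : Submodule ℝ X) (A' : D' →ₗ[ℝ] X) : Prop :=
  ∃ h : D ≤ D', ∀ x : D, A' ⟨(x : X), h x.2⟩ = A x

/-- `(A', D')` is the `t`-closure of `(A, D)`: the smallest `t`-closed extension. -/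
def IsClosureOp (t : TopologicalSpace X) (D : Submodule ℝ X) (A : D →ₗ[ℝ] X)
    (D' : Submodule ℝ X) (A' : D' →ₗ[ℝ] X) : Prop :=
  ExtensionOp D A D' A' ∧ ClosedOp t D' A' ∧
    ∀ (D'' : Submodule ℝ X) (A'' : D'' →ₗ[ℝ] X),
      ExtensionOp D A D'' A'' → ClosedOp t D'' A'' → ExtensionOp D' A' D'' A''

/-- `T` is a semigroup of linear operators which is strongly continuous for the topology `t`. -/
def IsSemigroupOn (t : TopologicalSpace X) (T : ℝ → X →ₗ[ℝ] X) : Prop :=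
  T 0 = LinearMap.id ∧ (∀ s u : ℝ, 0 ≤ s → 0 ≤ u → T (s + u) = (T s).comp (T u)) ∧
    ∀ x : X, @ContinuousOn ℝ X _ t (fun s => T s x) (Set.Ici 0)

/-- `T` is equicontinuous with respect to the system of seminorms `Γ`. -/
def EquicontOn (Γ : Set (Seminorm ℝ X)) (T : ℝ → X →ₗ[ℝ] X) : Prop :=
  ∀ p ∈ Γ, ∃ q ∈ Γ, ∃ C : ℝ, 0 ≤ C ∧ ∀ s : ℝ, 0 ≤ s → ∀ x : X, p (T s x) ≤ C * q x

/-- `T` is a contraction semigroup: `‖T(t)‖ ≤ 1` for all `t ≥ 0`. -/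
def ContractionSG (T : ℝ → X →ₗ[ℝ] X) : Prop :=
  ∀ s : ℝ, 0 ≤ s → ∀ x : X, ‖T s x‖ ≤ ‖x‖

/-- `T` is `(‖·‖,τ)`-equitight with respect to the system of seminorms `Γτ` generating `τ`. -/
def EquitightSG (Γτ : Set (Seminorm ℝ X)) (T : ℝ → X →ₗ[ℝ] X) : Prop :=
  ∀ ε : ℝ, 0 < ε → ∀ p ∈ Γτ, ∃ q ∈ Γτ, ∃ C : ℝ, 0 ≤ C ∧
    ∀ s : ℝ, 0 ≤ s → ∀ x : X, p (T s x) ≤ C * q x + ε * ‖x‖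

/-- `T` is a `τ`-bi-continuous semigroup. -/
def IsBiContSG (τ : TopologicalSpace X) (T : ℝ → X →ₗ[ℝ] X) : Prop :=
  IsSemigroupOn τ T ∧
    (∃ M : ℝ, 1 ≤ M ∧ ∃ ω : ℝ, ∀ s : ℝ, 0 ≤ s → ∀ x : X,
      ‖T s x‖ ≤ M * Real.exp (ω * s) * ‖x‖) ∧
    ∀ (x : ℕ → X) (x₀ : X), (∃ C : ℝ, ∀ n, ‖x n‖ ≤ C) →
      Filter.Tendsto x atTop (@nhds X τ x₀) →
      ∀ t₀ : ℝ, 0 < t₀ → ∀ V ∈ @nhds X τ 0,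
        ∃ N : ℕ, ∀ n ≥ N, ∀ s ∈ Set.Icc (0 : ℝ) t₀, T s (x n - x₀) ∈ V

/-- `(A, D)` is the generator of the `τ`-bi-continuous semigroup `T`. -/
def IsGeneratorBi (τ : TopologicalSpace X) (T : ℝ → X →ₗ[ℝ] X)
    (D : Submodule ℝ X) (A : D →ₗ[ℝ] X) : Prop :=
  (∀ x : X, x ∈ D ↔
      ((∃ y : X, Filter.Tendsto (fun s : ℝ => s⁻¹ • (T s x - x)) (𝓝[>] (0 : ℝ))
          (@nhds X τ y)) ∧
        ∃ C : ℝ, ∀ s ∈ Set.Ioc (0 : ℝ) 1, ‖T s x - x‖ ≤ C * s)) ∧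
    ∀ x : D, Filter.Tendsto (fun s : ℝ => s⁻¹ • (T s (x : X) - (x : X))) (𝓝[>] (0 : ℝ))
      (@nhds X τ (A x))

/-- `(A, D)` is the generator of the `t`-strongly continuous semigroup `T` (locally convex
setting). -/
def IsGeneratorLC (t : TopologicalSpace X) (T : ℝ → X →ₗ[ℝ] X)
    (D : Submodule ℝ X) (A : D →ₗ[ℝ] X) : Prop :=
  (∀ x : X, x ∈ D ↔
      ∃ y : X, Filter.Tendsto (fun s : ℝ => s⁻¹ • (T s x - x)) (𝓝[>] (0 : ℝ)) (@nhds X t y)) ∧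
    ∀ x : D, Filter.Tendsto (fun s : ℝ => s⁻¹ • (T s (x : X) - (x : X))) (𝓝[>] (0 : ℝ))
      (@nhds X t (A x))

/-- `D` is bi-dense in `X`: every point is the `τ`-limit of a norm-bounded sequence in `D`. -/
def BiDenselyDefined (τ : TopologicalSpace X) (D : Submodule ℝ X) : Prop :=
  ∀ x : X, ∃ u : ℕ → D, (∃ C : ℝ, ∀ n, ‖(u n : X)‖ ≤ C) ∧
    Filter.Tendsto (fun n => (u n : X)) atTop (@nhds X τ x)

/-- The seminorms `|||x||| = sup_n p_n(x) a_n` with `(p_n) ⊆ Γτ` and `(a_n)` a non-negative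
real null sequence; they generate the submixed topology `γ_s`. -/
def SubmixedSet (Γτ : Set (Seminorm ℝ X)) : Set (Seminorm ℝ X) :=
  {q : Seminorm ℝ X | ∃ (pn : ℕ → Seminorm ℝ X) (an : ℕ → ℝ),
      (∀ n, pn n ∈ Γτ) ∧ (∀ n, 0 ≤ an n) ∧ Filter.Tendsto an atTop (nhds 0) ∧
      ∀ x : X, q x = ⨆ n : ℕ, pn n x * an n}

/-- The subfamily of submixed seminorms with coefficients `0 ≤ a_n ≤ 1`. -/
def SubmixedSetOne (Γτ : Set (Seminorm ℝ X)) : Set (Seminorm ℝ X) :=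
  {q : Seminorm ℝ X | ∃ (pn : ℕ → Seminorm ℝ X) (an : ℕ → ℝ),
      (∀ n, pn n ∈ Γτ) ∧ (∀ n, 0 ≤ an n ∧ an n ≤ 1) ∧ Filter.Tendsto an atTop (nhds 0) ∧
      ∀ x : X, q x = ⨆ n : ℕ, pn n x * an n}

/-- The dual norm of a linear functional (as the supremum over the closed unit ball). -/
noncomputable def dualNormF (f : X →ₗ[ℝ] ℝ) : ℝ :=
  ⨆ x : {x : X // ‖x‖ ≤ 1}, |f x|

/-- The weak topology `σ(X, (X,t)')`. -/
def weakTopOf (t : TopologicalSpace X) : TopologicalSpace X :=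
  ⨅ f : {f : X →ₗ[ℝ] ℝ // @Continuous X ℝ t _ f},
    TopologicalSpace.induced (⇑f.1) inferInstance

/-- `(X,t)` is semi-reflexive: every `t`-(von Neumann-)bounded set is relatively compact
for the weak topology `σ(X,(X,t)')`. -/
def SemiReflexiveTop (t : TopologicalSpace X) : Prop :=
  ∀ S : Set X, @Bornology.IsVonNBounded ℝ X _ _ _ t S →
    @IsCompact X (weakTopOf t) (@closure X (weakTopOf t) S)

/-- A set is sequentially open for the topology `t`. -/
def SeqOpenSet (t : TopologicalSpace X) (s : Set X) : Prop :=
  ∀ (u : ℕ → X) (x : X), x ∈ s → Filter.Tendsto u atTop (@nhds X t x) →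
    ∀ᶠ n in atTop, u n ∈ s

/-- `(X,t)` is C-sequential: every convex sequentially open set is open. -/
def CSequentialTop (t : TopologicalSpace X) : Prop :=
  ∀ s : Set X, Convex ℝ s → SeqOpenSet t s → @IsOpen X t s

end Defs



namespace Statements

open LumerPhillips Filter Topology Set

variable {X : Type*}

section Aux

variable [NormedAddCommGroup X] [NormedSpace ℝ X]

lemma lmap_sub (D : Submodule ℝ X) (A : D →ₗ[ℝ] X) (l : ℝ) (a b : D) :
    lmap D A l (a - b) = lmap D A l a - lmap D A l b := by
  simp only [lmap, Submodule.coe_sub, map_sub, smul_sub]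
  abel

lemma seminorm_le_norm {Γ : Set (Seminorm ℝ X)} (hnorm : NormingSeminorms Γ)
    {p : Seminorm ℝ X} (hp : p ∈ Γ) (y : X) : p y ≤ ‖y‖ := by
  by_cases hb : BddAbove (Set.range fun q : Γ => (q : Seminorm ℝ X) y)
  · rw [hnorm y]
    exact le_ciSup hb ⟨p, hp⟩
  · have h0 : ‖y‖ = 0 := by rw [hnorm y]; exact Real.iSup_of_not_bddAbove hb
    have hy : y = 0 := norm_eq_zero.mp h0
    simp [hy]

lemma key_estimate {Γ : Set (Seminorm ℝ X)} (hnorm : NormingSeminorms Γ)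
    {D : Submodule ℝ X} {A : D →ₗ[ℝ] X} (hdiss : GammaDissipative Γ D A)
    {l : ℝ} (hl : 0 < l) (x : D) : l * ‖(x : X)‖ ≤ ‖lmap D A l x‖ := by
  have h1 : ‖(x : X)‖ ≤ l⁻¹ * ‖lmap D A l x‖ := by
    rw [hnorm]
    apply Real.iSup_le
    · rintro ⟨p, hp⟩
      have h2 := hdiss l hl x p hp
      have h3 := seminorm_le_norm hnorm hp (lmap D A l x)
      rw [le_inv_mul_iff₀ hl]
      linarith
    · positivity
  calc l * ‖(x : X)‖ ≤ l * (l⁻¹ * ‖lmap D A l x‖) :=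
        mul_le_mul_of_nonneg_left h1 hl.le
    _ = ‖lmap D A l x‖ := by field_simp

lemma surj_step [CompleteSpace X] {D : Submodule ℝ X} {A : D →ₗ[ℝ] X}
    {Γ : Set (Seminorm ℝ X)} (hnorm : NormingSeminorms Γ)
    (hdiss : GammaDissipative Γ D A)
    {l₀ l : ℝ} (hl₀ : 0 < l₀) (hl : 0 < l) (hlt : |l - l₀| < l₀)
    (hsurj : Function.Surjective (lmap D A l₀)) :
    Function.Surjective (lmap D A l) := by
  intro y
  choose f hf using hsurj
  set Φ : X → X := fun z => (f (y + (l₀ - l) • z) : X) with hΦ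
  have hK : (0 : ℝ) ≤ |l₀ - l| / l₀ := by positivity
  have hdiffeq : ∀ a b : X,
      lmap D A l₀ (f (y + (l₀ - l) • a) - f (y + (l₀ - l) • b)) = (l₀ - l) • (a - b) := by
    intro a b
    rw [lmap_sub, hf, hf, smul_sub]
    abel
  have hlip : LipschitzWith ⟨|l₀ - l| / l₀, hK⟩ Φ := by
    apply LipschitzWith.of_dist_le_mul
    intro a b
    have h := key_estimate hnorm hdiss hl₀ (f (y + (l₀ - l) • a) - f (y + (l₀ - l) • b))
    rw [hdiffeq a b] at h
    have hn : ‖(l₀ - l) • (a - b)‖ = |l₀ - l| * ‖a - b‖ := by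
      rw [norm_smul, Real.norm_eq_abs]
    rw [hn] at h
    have hcoe : Φ a - Φ b = ((f (y + (l₀ - l) • a) - f (y + (l₀ - l) • b) : D) : X) := by
      simp [hΦ]
    rw [dist_eq_norm, dist_eq_norm, hcoe]
    show _ ≤ |l₀ - l| / l₀ * ‖a - b‖
    rw [div_mul_eq_mul_div, le_div_iff₀ hl₀]
    nlinarith [norm_nonneg ((f (y + (l₀ - l) • a) - f (y + (l₀ - l) • b) : D) : X)]
  have hcontr : ContractingWith ⟨|l₀ - l| / l₀, hK⟩ Φ := by
    refine ⟨?_, hlip⟩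
    apply NNReal.coe_lt_coe.mp
    show |l₀ - l| / l₀ < (1 : ℝ)
    rw [div_lt_one hl₀, abs_sub_comm]
    exact hlt
  have : Nonempty X := ⟨0⟩
  set x : X := hcontr.fixedPoint Φ with hx
  have hfix : Φ x = x := hcontr.fixedPoint_isFixedPt
  set d : D := f (y + (l₀ - l) • x) with hd
  have hdx : (d : X) = x := hfix
  refine ⟨d, ?_⟩
  have hsplit : lmap D A l d = lmap D A l₀ d - (l₀ - l) • (d : X) := by
    simp only [lmap, sub_smul]
    abel
  rw [hsplit, hf, hdx]
  abel

lemma surj_all [CompleteSpace X] {D : Submodule ℝ X} {A : D →ₗ[ℝ] X}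
    {Γ : Set (Seminorm ℝ X)} (hnorm : NormingSeminorms Γ)
    (hdiss : GammaDissipative Γ D A)
    {l₀ : ℝ} (hl₀ : 0 < l₀) (hs : Function.Surjective (lmap D A l₀))
    {l : ℝ} (hl : 0 < l) : Function.Surjective (lmap D A l) := by
  have hpow : ∀ n : ℕ, Function.Surjective (lmap D A ((3 / 2) ^ n * l₀)) := by
    intro n
    induction n with
    | zero => simpa using hs
    | succ n ih =>
      have hm : (0 : ℝ) < (3 / 2) ^ n * l₀ := by positivity
      apply surj_step hnorm hdiss hm (by positivity) ?_ ih
      have heq : (3 / 2 : ℝ) ^ (n + 1) * l₀ - (3 / 2) ^ n * l₀ = (1 / 2) * ((3 / 2) ^ n * l₀) := by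
        ring
      rw [heq, abs_of_pos (by positivity)]
      linarith
  obtain ⟨n, hn⟩ := pow_unbounded_of_one_lt (l / (2 * l₀)) (by norm_num : (1 : ℝ) < 3 / 2)
  have hm : (0 : ℝ) < (3 / 2) ^ n * l₀ := by positivity
  have hlt : l < 2 * ((3 / 2) ^ n * l₀) := by
    rw [div_lt_iff₀ (by positivity)] at hn
    nlinarith
  apply surj_step hnorm hdiss hm hl ?_ (hpow n)
  rw [abs_lt]
  constructor <;> linarith

end Aux

theorem statement6 [NormedAddCommGroup X] [NormedSpace ℝ X] [CompleteSpace X]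
    (τ γ υ : TopologicalSpace X) (Γτ Γυ : Set (Seminorm ℝ X))
    (hSaks : IsSaksSystem τ Γτ) (hmixed : IsMixedTopology τ γ) (hseq : SeqCompleteTop γ)
    (hυ2 : @T2Space X υ) (hυlc : @LocallyConvexSpace ℝ X _ _ _ _ υ)
    (hdir : DirectedSeminorms Γυ) (hgen : GeneratesTop Γυ υ) (hnorm : NormingSeminorms Γυ)
    (D : Submodule ℝ X) (A : D →ₗ[ℝ] X)
    (hdiss : GammaDissipative Γυ D A) :
    ((∃ l : ℝ, 0 < l ∧ Function.Surjective (lmap D A l)) ↔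
        ∀ l : ℝ, 0 < l → Function.Surjective (lmap D A l)) ∧
      ((∃ l : ℝ, 0 < l ∧ Function.Surjective (lmap D A l)) →
        ∀ l : ℝ, 0 < l → Function.Bijective (lmap D A l) ∧
          ∃ C : ℝ, ∀ x : D, ‖(x : X)‖ ≤ C * ‖lmap D A l x‖) := by
  have hinj : ∀ l : ℝ, 0 < l → Function.Injective (lmap D A l) := by
    intro l hl a b hab
    have h0 : lmap D A l (a - b) = 0 := by rw [lmap_sub, hab, sub_self]
    have h := key_estimate hnorm hdiss hl (a - b)
    rw [h0, norm_zero] at h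
    have hz : ‖((a - b : D) : X)‖ = 0 :=
      le_antisymm (by nlinarith [norm_nonneg ((a - b : D) : X)]) (norm_nonneg _)
    have : ((a - b : D) : X) = 0 := norm_eq_zero.mp hz
    have : (a : X) = b := by
      rw [Submodule.coe_sub, sub_eq_zero] at this
      exact this
    exact Subtype.ext this
  constructor
  · constructor
    · rintro ⟨l₀, hl₀, hs⟩ l hl
      exact surj_all hnorm hdiss hl₀ hs hl
    · intro h
      exact ⟨1, one_pos, h 1 one_pos⟩
  · rintro ⟨l₀, hl₀, hs⟩ l hl
    refine ⟨⟨hinj l hl, surj_all hnorm hdiss hl₀ hs hl⟩, l⁻¹, fun x => ?_⟩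
    have h := key_estimate hnorm hdiss hl x
    calc ‖(x : X)‖ = l⁻¹ * (l * ‖(x : X)‖) := by field_simp
      _ ≤ l⁻¹ * ‖lmap D A l x‖ := mul_le_mul_of_nonneg_left h (by positivity)


end Statements
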